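/- The set S = {λ ∈ ℂ : |λ| > 1 and there exists z ∈ ℂ with cos z ≠ 0, λ·tan z = z and |deriv f_λ(z)| < 1} (the set of parameters of modulus greater than 1 for which f_λ has an attracting fixed point) is a connected subset of ℂ, and it contains every real λ with λ > 1. -/

import Mathlib

open Complex Filter

/-- The tangent family: `f_λ(z) = λ · tan z`, with Mathlib's total complex tangent. -/
noncomputable def ftan (lam : ℂ) : ℂ → ℂ := fun z => lam * Complex.tan z

open Real

-- L: sinh u - u nonneg basics
lemma self_le_sinh' {u : ℝ} (hu : 0 ≤ u) : u ≤ Real.sinh u := by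
  rcases eq_or_lt_of_le hu with h | h
  · simp [← h]
  · exact (Real.self_lt_sinh_iff.2 h).le

lemma cosh_quad {u : ℝ} (hu : 0 ≤ u) : 1 + u ^ 2 / 2 ≤ Real.cosh u := by
  have hmono : MonotoneOn (fun u : ℝ => Real.cosh u - 1 - u ^ 2 / 2) (Set.Ici 0) := by
    apply monotoneOn_of_deriv_nonneg (convex_Ici 0)
    · fun_prop
    · fun_prop
    · intro x hx
      have hx : 0 < x := by simpa [interior_Ici] using hx
      have h1 : HasDerivAt (fun u : ℝ => Real.cosh u - 1 - u ^ 2 / 2)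
          (Real.sinh x - 0 - 2 * x ^ 1 / 2) x := by
        exact (((Real.hasDerivAt_cosh x).sub_const 1).sub
          (((hasDerivAt_id x).pow 2).div_const 2)).congr_deriv (by simp)
      rw [h1.deriv]
      simp only [pow_one]
      nlinarith [self_le_sinh' hx.le]
  have := hmono (Set.self_mem_Ici) (Set.mem_Ici.2 hu) hu
  simp at this
  linarith

lemma sinh_cubic {u : ℝ} (hu : 0 ≤ u) : u + u ^ 3 / 6 ≤ Real.sinh u := by
  have hmono : MonotoneOn (fun u : ℝ => Real.sinh u - u - u ^ 3 / 6) (Set.Ici 0) := by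
    apply monotoneOn_of_deriv_nonneg (convex_Ici 0)
    · fun_prop
    · fun_prop
    · intro x hx
      have hx : 0 < x := by simpa [interior_Ici] using hx
      have h1 : HasDerivAt (fun u : ℝ => Real.sinh u - u - u ^ 3 / 6)
          (Real.cosh x - 1 - 3 * x ^ 2 / 6) x := by
        exact (((Real.hasDerivAt_sinh x).sub (hasDerivAt_id x)).sub
          (((hasDerivAt_id x).pow 3).div_const 6)).congr_deriv (by simp)
      rw [h1.deriv]
      nlinarith [cosh_quad hx.le]
  have := hmono (Set.self_mem_Ici) (Set.mem_Ici.2 hu) hu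
  simp at this
  linarith

-- monotone of sinh^2 - sq
lemma sinh_sq_sub_sq_mono : MonotoneOn (fun u : ℝ => Real.sinh u ^ 2 - u ^ 2) (Set.Ici 0) := by
  apply monotoneOn_of_deriv_nonneg (convex_Ici 0)
  · fun_prop
  · fun_prop
  · intro x hx
    have hx : 0 < x := by simpa [interior_Ici] using hx
    have h1 : HasDerivAt (fun u : ℝ => Real.sinh u ^ 2 - u ^ 2)
        (2 * Real.sinh x ^ 1 * Real.cosh x - 2 * x ^ 1) x := by
      exact (((Real.hasDerivAt_sinh x).pow 2).sub ((hasDerivAt_id x).pow 2)).congr_deriv (by simp)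
    rw [h1.deriv]
    have h2 : 2 * x ≤ Real.sinh (2 * x) := self_le_sinh' (by linarith)
    rw [Real.sinh_two_mul] at h2
    simp only [pow_one]
    nlinarith

-- claim F
lemma claimF {β : ℝ} (hβ0 : 0 < β) (hβ : β < π / 2) :
    β * Real.cos β < Real.arsinh (Real.sin β) * Real.sqrt (1 + Real.sin β ^ 2) := by
  set Φ : ℝ → ℝ := fun b => Real.arsinh (Real.sin b) * Real.sqrt (1 + Real.sin b ^ 2) - b * Real.cos b with hΦ
  have key : ∀ b : ℝ, HasDerivAt Φ
      ((Real.sqrt (1 + Real.sin b ^ 2))⁻¹ * Real.cos b * Real.sqrt (1 + Real.sin b ^ 2)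
        + Real.arsinh (Real.sin b) * ((2 * Real.sin b ^ 1 * Real.cos b) / (2 * Real.sqrt (1 + Real.sin b ^ 2)))
        - (1 * Real.cos b + b * (-Real.sin b))) b := by
    intro b
    have hpos : (0:ℝ) < 1 + Real.sin b ^ 2 := by positivity
    have h1 : HasDerivAt (fun b : ℝ => Real.arsinh (Real.sin b))
        ((Real.sqrt (1 + Real.sin b ^ 2))⁻¹ * Real.cos b) b :=
      (Real.hasDerivAt_arsinh _).comp b (Real.hasDerivAt_sin b)
    have h2 : HasDerivAt (fun b : ℝ => Real.sqrt (1 + Real.sin b ^ 2))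
        ((2 * Real.sin b ^ 1 * Real.cos b) / (2 * Real.sqrt (1 + Real.sin b ^ 2))) b := by
      have hinner : HasDerivAt (fun b : ℝ => 1 + Real.sin b ^ 2)
          (2 * Real.sin b ^ 1 * Real.cos b) b := by
        simpa using ((Real.hasDerivAt_sin b).pow 2).const_add 1
      exact ((Real.hasDerivAt_sqrt hpos.ne').comp b hinner).congr_deriv (by ring)
    exact (h1.mul h2).sub ((hasDerivAt_id b).mul (Real.hasDerivAt_cos b))
  have hmono : StrictMonoOn Φ (Set.Icc 0 (π / 2)) := by
    apply strictMonoOn_of_deriv_pos (convex_Icc 0 (π / 2))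
    · exact (continuous_iff_continuousAt.2 fun b => (key b).differentiableAt.continuousAt).continuousOn
    · intro b hb
      rw [interior_Icc] at hb
      rw [(key b).deriv]
      have hsqrt : (0:ℝ) < Real.sqrt (1 + Real.sin b ^ 2) := Real.sqrt_pos.2 (by positivity)
      rw [inv_mul_eq_div, div_mul_cancel₀ _ hsqrt.ne']
      have hsin : 0 < Real.sin b := Real.sin_pos_of_pos_of_lt_pi hb.1 (by linarith [Real.pi_pos, hb.2])
      have hars : 0 < Real.arsinh (Real.sin b) := Real.arsinh_pos_iff.2 hsin
      have hcos : 0 < Real.cos b := Real.cos_pos_of_mem_Ioo ⟨by linarith [Real.pi_pos, hb.1], hb.2⟩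
      have : 0 < Real.arsinh (Real.sin b) * ((2 * Real.sin b ^ 1 * Real.cos b) / (2 * Real.sqrt (1 + Real.sin b ^ 2))) := by
        positivity
      nlinarith [mul_pos hb.1 hsin]
  have h0 : Φ 0 = 0 := by simp [hΦ]
  have := hmono (Set.mem_Icc.2 ⟨le_refl 0, by linarith [Real.pi_pos]⟩)
    (Set.mem_Icc.2 ⟨hβ0.le, hβ.le⟩) hβ0
  rw [h0] at this
  simp only [hΦ] at this
  linarith

-- claim E' : b sin b < a sinh a
lemma claimE' {a b : ℝ} (ha : 0 < a) (hb : 0 < b) (hbπ : b < π)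
    (h : Real.sin (b / 2) < Real.sinh (a / 2)) : b * Real.sin b < a * Real.sinh a := by
  set β := b / 2 with hβ
  set m := Real.sin β with hm
  have hβ0 : 0 < β := by positivity
  have hβπ : β < π / 2 := by rw [hβ]; linarith
  have hm0 : 0 < m := Real.sin_pos_of_pos_of_lt_pi hβ0 (by linarith [Real.pi_pos])
  set α₀ := Real.arsinh m with hα₀
  have hsα₀ : Real.sinh α₀ = m := Real.sinh_arsinh m
  have hα₀0 : 0 < α₀ := Real.arsinh_pos_iff.2 hm0
  have hα₀lt : α₀ < a / 2 := by
    have : Real.sinh α₀ < Real.sinh (a / 2) := by rw [hsα₀]; exact h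
    exact Real.sinh_lt_sinh.1 this
  have hcosh : Real.cosh α₀ = Real.sqrt (1 + m ^ 2) := Real.cosh_arsinh m
  have hF := claimF hβ0 hβπ
  rw [← hm, ← hα₀, ← hcosh] at hF
  -- b * sin b = 4 β sin β cos β ; a sinh a = 4 (a/2) sinh(a/2) cosh(a/2)
  have hbs : b * Real.sin b = 4 * β * Real.sin β * Real.cos β := by
    have : b = 2 * β := by rw [hβ]; ring
    rw [this, Real.sin_two_mul]; ring
  have has : a * Real.sinh a = 4 * (a / 2) * Real.sinh (a / 2) * Real.cosh (a / 2) := by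
    have : a = 2 * (a / 2) := by ring
    nth_rewrite 1 [this]
    nth_rewrite 2 [this]
    rw [Real.sinh_two_mul]; ring
  rw [hbs, has]
  have step1 : 4 * β * Real.sin β * Real.cos β < 4 * α₀ * Real.sinh α₀ * Real.cosh α₀ := by
    rw [hsα₀]
    nlinarith [claimF hβ0 hβπ, hm0, Real.cosh_arsinh m]
  have step2 : 4 * α₀ * Real.sinh α₀ * Real.cosh α₀ < 4 * (a / 2) * Real.sinh (a / 2) * Real.cosh (a / 2) := by
    have h1 : Real.sinh α₀ < Real.sinh (a / 2) := Real.sinh_lt_sinh.2 hα₀lt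
    have h2 : Real.cosh α₀ < Real.cosh (a / 2) := by
      rw [Real.cosh_lt_cosh]
      rw [abs_of_pos hα₀0, abs_of_pos (by linarith : (0:ℝ) < a / 2)]
      exact hα₀lt
    have hs0 : 0 < Real.sinh α₀ := by rw [hsα₀]; exact hm0
    have hc0 : 0 < Real.cosh α₀ := Real.cosh_pos α₀
    have m1 : α₀ * Real.sinh α₀ < (a / 2) * Real.sinh (a / 2) :=
      mul_lt_mul'' hα₀lt h1 hα₀0.le hs0.le
    have m2 : (α₀ * Real.sinh α₀) * Real.cosh α₀ < ((a / 2) * Real.sinh (a / 2)) * Real.cosh (a / 2) :=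
      mul_lt_mul'' m1 h2 (by positivity) hc0.le
    nlinarith [m2]
  linarith

-- claim E : no interior max above endpoints
lemma claimE {x y : ℝ} (hx0 : 0 ≤ x) (hx : x < π / 2) (hy : 0 ≤ y) {t : ℝ}
    (ht : t ∈ Set.Icc (0:ℝ) 1) :
    Real.sinh (t * y) ^ 2 - Real.sin (t * x) ^ 2
      ≤ max 0 (Real.sinh y ^ 2 - Real.sin x ^ 2) := by
  set h : ℝ → ℝ := fun t => Real.sinh (t * y) ^ 2 - Real.sin (t * x) ^ 2 with hh
  have hder : ∀ s : ℝ, HasDerivAt h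
      (2 * Real.sinh (s * y) ^ 1 * (Real.cosh (s * y) * y)
        - 2 * Real.sin (s * x) ^ 1 * (Real.cos (s * x) * x)) s := by
    intro s
    have h1 : HasDerivAt (fun s : ℝ => s * y) y s := hasDerivAt_mul_const y
    have h2 : HasDerivAt (fun s : ℝ => s * x) x s := hasDerivAt_mul_const x
    exact (((Real.hasDerivAt_sinh (s * y)).comp s h1).pow 2).sub
      (((Real.hasDerivAt_sin (s * x)).comp s h2).pow 2)
  have hcont : Continuous h := by fun_prop
  -- key: derivative positive where h > 0, s ∈ (0,1]
  have hpos : ∀ s : ℝ, 0 < s → s ≤ 1 → 0 < h s → 0 < deriv h s := by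
    intro s hs0 hs1 hhs
    rw [(hder s).deriv]
    have hsh : 0 ≤ Real.sinh (s * y) := by
      rcases le_or_gt 0 (s * y) with h' | h'
      · exact (self_le_sinh' h').trans' h' |>.trans (le_refl _) |>.trans (le_refl _)
      · nlinarith [mul_nonneg hs0.le hy]
    have habs : |Real.sin (s * x)| < Real.sinh (s * y) := by
      have h2 : Real.sin (s * x) ^ 2 < Real.sinh (s * y) ^ 2 := by
        simp only [hh] at hhs; linarith
      nlinarith [abs_nonneg (Real.sin (s * x)), _root_.sq_abs (Real.sin (s * x)), hsh]
    -- goal: 0 < y sinh(2sy)/... we show 2s * goalexpr = a sinh a - b sin b > 0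
    have key : 2 * s * x * Real.sin (2 * s * x) < 2 * s * y * Real.sinh (2 * s * y) := by
      rcases eq_or_lt_of_le hx0 with hx' | hx'
      · have hy0 : 0 < Real.sinh (s * y) := lt_of_le_of_lt (abs_nonneg _) habs
        have hsy : 0 < s * y := by
          rcases le_or_gt (s * y) 0 with h' | h'
          · exfalso; nlinarith [Real.sinh_nonpos_iff.mpr h']
          · exact h'
        rw [← hx']
        simp only [mul_zero, zero_mul, Real.sin_zero]
        have : 0 < Real.sinh (2 * s * y) := Real.sinh_pos_iff.2 (by linarith)
        nlinarith [mul_pos hsy this]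
      · apply claimE' (a := 2 * s * y) (b := 2 * s * x)
        · have hy0 : 0 < Real.sinh (s * y) := lt_of_le_of_lt (abs_nonneg _) habs
          have : 0 < s * y := by
            rcases le_or_gt (s * y) 0 with h' | h'
            · exfalso; nlinarith [Real.sinh_nonpos_iff.mpr h']
            · exact h'
          linarith
        · positivity
        · nlinarith [Real.pi_pos]
        · have h1 : (2 * s * x) / 2 = s * x := by ring
          have h2 : (2 * s * y) / 2 = s * y := by ring
          rw [h1, h2]
          exact lt_of_le_of_lt (le_abs_self _) habs
    have expand : 2 * s * (2 * Real.sinh (s * y) ^ 1 * (Real.cosh (s * y) * y)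
        - 2 * Real.sin (s * x) ^ 1 * (Real.cos (s * x) * x))
        = 2 * s * y * Real.sinh (2 * s * y) - 2 * s * x * Real.sin (2 * s * x) := by
      have e1 : Real.sinh (2 * s * y) = 2 * Real.sinh (s * y) * Real.cosh (s * y) := by
        rw [show 2 * s * y = 2 * (s * y) by ring, Real.sinh_two_mul]
      have e2 : Real.sin (2 * s * x) = 2 * Real.sin (s * x) * Real.cos (s * x) := by
        rw [show 2 * s * x = 2 * (s * x) by ring, Real.sin_two_mul]
      rw [e1, e2]; ring
    nlinarith [key, expand]
  -- now the sup/inf argument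
  by_contra hcon
  push_neg at hcon
  set ℓ := max 0 (Real.sinh y ^ 2 - Real.sin x ^ 2) with hℓ
  have hht : ℓ < h t := hcon
  have ht0 : t ≠ 0 := by
    intro h'
    have : h t = 0 := by simp [hh, h']
    rw [this] at hht
    exact absurd hht (not_lt.2 (le_max_left _ _))
  have ht1 : t ≠ 1 := by
    intro h'
    have : h t ≤ ℓ := by
      rw [h', hh]
      simp only [one_mul]
      exact le_max_right _ _
    linarith
  have htIoo : t ∈ Set.Ioo (0:ℝ) 1 := ⟨lt_of_le_of_ne ht.1 (Ne.symm ht0), lt_of_le_of_ne ht.2 ht1⟩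
  set K := {s : ℝ | s ∈ Set.Icc t 1 ∧ h s ≤ ℓ} with hK
  have hKne : (1:ℝ) ∈ K := ⟨⟨htIoo.2.le, le_refl 1⟩, by
    simp only [hh, one_mul]; exact le_max_right _ _⟩
  have hKclosed : IsClosed K := by
    have : K = Set.Icc t 1 ∩ h ⁻¹' (Set.Iic ℓ) := by
      ext s; simp [hK, Set.mem_Icc]
    rw [this]
    exact isClosed_Icc.inter (IsClosed.preimage hcont isClosed_Iic)
  have hKbdd : BddBelow K := ⟨t, fun s hs => hs.1.1⟩
  set T := sInf K with hT
  have hTK : T ∈ K := hKclosed.csInf_mem ⟨1, hKne⟩ hKbdd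
  have hTt : t < T := by
    rcases lt_or_eq_of_le hTK.1.1 with h' | h'
    · exact h'
    · exfalso; rw [h'] at hht; linarith [hTK.2]
  have hbelow : ∀ s, t ≤ s → s < T → ℓ < h s := by
    intro s hs1 hs2
    by_contra h'
    push_neg at h'
    have : s ∈ K := ⟨⟨hs1, by linarith [hTK.1.2]⟩, h'⟩
    exact absurd (csInf_le hKbdd this) (not_le.2 hs2)
  have hmono : StrictMonoOn h (Set.Icc t T) := by
    apply strictMonoOn_of_deriv_pos (convex_Icc t T) hcont.continuousOn
    intro s hs
    rw [interior_Icc] at hs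
    apply hpos s (lt_trans htIoo.1 hs.1) (le_trans hs.2.le hTK.1.2)
    have := hbelow s hs.1.le hs.2
    have h0ℓ : (0:ℝ) ≤ ℓ := le_max_left _ _
    linarith
  have := hmono (Set.mem_Icc.2 ⟨le_refl t, hTt.le⟩) (Set.mem_Icc.2 ⟨hTt.le, le_refl T⟩) hTt
  linarith [hTK.2]

open Complex in
lemma abs_sin_sq (z : ℂ) :
    ‖(Complex.sin z)‖ ^ 2 = Real.sin z.re ^ 2 + Real.sinh z.im ^ 2 := by
  rw [Complex.sq_norm, Complex.sin_eq]
  have : (Complex.sin z.re * Complex.cosh z.im + Complex.cos z.re * Complex.sinh z.im * Complex.I)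
      = ((Real.sin z.re * Real.cosh z.im : ℝ) : ℂ) + ((Real.cos z.re * Real.sinh z.im : ℝ) : ℂ) * Complex.I := by
    push_cast [← Complex.ofReal_sin, ← Complex.ofReal_cos, ← Complex.ofReal_sinh, ← Complex.ofReal_cosh]
    ring
  rw [this, Complex.normSq_add_mul_I]
  have h1 := Real.sin_sq_add_cos_sq z.re
  have h2 := Real.cosh_sq z.im
  nlinarith [h1, h2]

open Complex in
lemma abs_cos_sq (z : ℂ) :
    ‖(Complex.cos z)‖ ^ 2 = Real.cos z.re ^ 2 + Real.sinh z.im ^ 2 := by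
  rw [Complex.sq_norm, Complex.cos_eq]
  have : (Complex.cos z.re * Complex.cosh z.im - Complex.sin z.re * Complex.sinh z.im * Complex.I)
      = ((Real.cos z.re * Real.cosh z.im : ℝ) : ℂ) + ((-(Real.sin z.re * Real.sinh z.im) : ℝ) : ℂ) * Complex.I := by
    push_cast [← Complex.ofReal_sin, ← Complex.ofReal_cos, ← Complex.ofReal_sinh, ← Complex.ofReal_cosh]
    ring
  rw [this, Complex.normSq_add_mul_I]
  have h1 := Real.sin_sq_add_cos_sq z.re
  have h2 := Real.cosh_sq z.im
  nlinarith [h1, h2]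

lemma abs_z_sq (z : ℂ) : ‖z‖ ^ 2 = z.re ^ 2 + z.im ^ 2 := by
  rw [Complex.sq_norm, Complex.normSq_apply]; ring

lemma claimD_complex {z : ℂ} (hre0 : 0 ≤ z.re) (hxpi : z.re < π / 2) (him0 : 0 ≤ z.im)
    (hslt : ‖z‖ < ‖(Complex.sin z)‖) :
    ‖(Complex.sin z)‖ < ‖z‖ * ‖(Complex.cos z)‖ := by
  set x := z.re with hx
  set y := z.im with hy
  have hzpos : 0 < ‖z‖ := by
    rcases eq_or_lt_of_le (norm_nonneg z) with h' | h'
    · exfalso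
      have hz0 : z = 0 := by
        have := norm_eq_zero.1 h'.symm
        exact this
      rw [hz0] at hslt
      simp at hslt
    · exact h'
  have hcos_seg : ∀ s : ℝ, s ∈ Set.Icc (0:ℝ) 1 →
      ‖(Complex.cos ((s : ℂ) * z))‖ ^ 2
        ≤ 1 + max 0 (Real.sinh y ^ 2 - Real.sin x ^ 2) := by
    intro s hs
    have hre' : ((s : ℂ) * z).re = s * x := by simp [hx]
    have him' : ((s : ℂ) * z).im = s * y := by simp [hy]
    rw [abs_cos_sq, hre', him']
    have hE := claimE hre0 hxpi him0 hs
    have hpyth := Real.sin_sq_add_cos_sq (s * x)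
    nlinarith [hE, hpyth]
  have hderiv : ∀ s ∈ Set.uIcc (0:ℝ) 1,
      HasDerivAt (fun t : ℝ => Complex.sin ((t : ℂ) * z)) (Complex.cos ((s : ℂ) * z) * z) s := by
    intro s _
    have h1 : HasDerivAt (fun w : ℂ => Complex.sin (w * z)) (Complex.cos ((s : ℂ) * z) * z) (s : ℂ) := by
      exact (Complex.hasDerivAt_sin ((s : ℂ) * z)).comp (s : ℂ) (hasDerivAt_mul_const z)
    exact h1.comp_ofReal
  have hcont : Continuous fun s : ℝ => Complex.cos ((s : ℂ) * z) * z := by fun_prop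
  have hFTC : ∫ s in (0:ℝ)..1, Complex.cos ((s : ℂ) * z) * z = Complex.sin z := by
    rw [intervalIntegral.integral_eq_sub_of_hasDerivAt hderiv (hcont.intervalIntegrable 0 1)]
    simp
  have habs_sin' : ‖(Complex.sin z)‖ ^ 2 = Real.sin x ^ 2 + Real.sinh y ^ 2 :=
    abs_sin_sq z
  have habs_cos' : ‖(Complex.cos z)‖ ^ 2 = Real.cos x ^ 2 + Real.sinh y ^ 2 :=
    abs_cos_sq z
  -- step 1 : 0 < sinh y ^ 2 - sin x ^ 2
  have h1pos : 0 < Real.sinh y ^ 2 - Real.sin x ^ 2 := by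
    by_contra h'
    push_neg at h'
    have hmax : max 0 (Real.sinh y ^ 2 - Real.sin x ^ 2) = 0 := max_eq_left (by linarith)
    have hbound : ∀ s ∈ Set.uIoc (0:ℝ) 1, ‖Complex.cos ((s : ℂ) * z) * z‖ ≤ ‖z‖ := by
      intro s hs
      rw [Set.uIoc_of_le (by norm_num : (0:ℝ) ≤ 1)] at hs
      have hs' : s ∈ Set.Icc (0:ℝ) 1 := ⟨hs.1.le, hs.2⟩
      have h2 := hcos_seg s hs'
      rw [hmax] at h2
      have habs1 : ‖(Complex.cos ((s : ℂ) * z))‖ ≤ 1 := by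
        nlinarith [norm_nonneg (Complex.cos ((s : ℂ) * z))]
      rw [norm_mul]
      calc ‖Complex.cos ((s : ℂ) * z)‖ * ‖z‖ ≤ 1 * ‖z‖ := by
            apply mul_le_mul_of_nonneg_right _ (norm_nonneg z)
            exact habs1
        _ = ‖z‖ := by rw [one_mul]
    have hle := intervalIntegral.norm_integral_le_of_norm_le_const hbound
    rw [hFTC] at hle
    norm_num at hle
    linarith
  have hmax : max 0 (Real.sinh y ^ 2 - Real.sin x ^ 2) = Real.sinh y ^ 2 - Real.sin x ^ 2 :=
    max_eq_right h1pos.le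
  have hceq : ‖(Complex.cos z)‖ ^ 2 = 1 + (Real.sinh y ^ 2 - Real.sin x ^ 2) := by
    rw [habs_cos']
    nlinarith [Real.sin_sq_add_cos_sq x]
  have hc1 : 1 < ‖(Complex.cos z)‖ := by
    nlinarith [norm_nonneg (Complex.cos z)]
  have hstrict : (∫ s in (0:ℝ)..1, ‖Complex.cos ((s : ℂ) * z) * z‖)
      < ∫ _ in (0:ℝ)..1, ‖z‖ * ‖(Complex.cos z)‖ := by
    apply intervalIntegral.integral_lt_integral_of_continuousOn_of_le_of_exists_lt
      (by norm_num : (0:ℝ) < 1)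
    · exact (hcont.norm).continuousOn
    · exact continuousOn_const
    · intro s hs
      have hs' : s ∈ Set.Icc (0:ℝ) 1 := ⟨hs.1.le, hs.2⟩
      have h2 := hcos_seg s hs'
      rw [hmax] at h2
      have h3 : ‖(Complex.cos ((s : ℂ) * z))‖ ≤ ‖(Complex.cos z)‖ := by
        nlinarith [norm_nonneg (Complex.cos ((s : ℂ) * z)), norm_nonneg (Complex.cos z)]
      rw [norm_mul]
      calc ‖(Complex.cos ((s : ℂ) * z))‖ * ‖z‖
          ≤ ‖(Complex.cos z)‖ * ‖z‖ :=
            mul_le_mul_of_nonneg_right h3 (norm_nonneg z)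
        _ = ‖z‖ * ‖(Complex.cos z)‖ := by ring
    · refine ⟨0, ⟨le_refl 0, by norm_num⟩, ?_⟩
      simp only [Complex.ofReal_zero, zero_mul, Complex.cos_zero, one_mul]
      nlinarith [hzpos, hc1]
  have hintconst : (∫ _ in (0:ℝ)..1, ‖z‖ * ‖(Complex.cos z)‖)
      = ‖z‖ * ‖(Complex.cos z)‖ := by
    rw [intervalIntegral.integral_const]; simp
  calc ‖(Complex.sin z)‖ = ‖∫ s in (0:ℝ)..1, Complex.cos ((s : ℂ) * z) * z‖ := by
        rw [hFTC]
    _ ≤ ∫ s in (0:ℝ)..1, ‖Complex.cos ((s : ℂ) * z) * z‖ :=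
        intervalIntegral.norm_integral_le_integral_norm (by norm_num)
    _ < ‖z‖ * ‖(Complex.cos z)‖ := by rw [← hintconst]; exact hstrict

lemma claimD {x y : ℝ} (hx0 : 0 ≤ x) (hy0 : 0 ≤ y) (hx2 : x ^ 2 < 2)
    (hKK : x ^ 2 + y ^ 2 < Real.sin x ^ 2 + Real.sinh y ^ 2) :
    Real.sin x ^ 2 + Real.sinh y ^ 2 < (x ^ 2 + y ^ 2) * (Real.cos x ^ 2 + Real.sinh y ^ 2) := by
  have hxpi : x < π / 2 := by nlinarith [Real.pi_gt_three]
  set z : ℂ := ⟨x, y⟩ with hz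
  have hre : z.re = x := rfl
  have him : z.im = y := rfl
  have habs_z : ‖z‖ ^ 2 = x ^ 2 + y ^ 2 := by rw [abs_z_sq, hre, him]
  have habs_sin : ‖(Complex.sin z)‖ ^ 2 = Real.sin x ^ 2 + Real.sinh y ^ 2 := by
    rw [abs_sin_sq, hre, him]
  have habs_cos : ‖(Complex.cos z)‖ ^ 2 = Real.cos x ^ 2 + Real.sinh y ^ 2 := by
    rw [abs_cos_sq, hre, him]
  have hslt : ‖z‖ < ‖(Complex.sin z)‖ := by
    have h2 : ‖z‖ ^ 2 < ‖(Complex.sin z)‖ ^ 2 := by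
      rw [habs_z, habs_sin]; exact hKK
    nlinarith [norm_nonneg z, norm_nonneg (Complex.sin z)]
  have hfinal := claimD_complex (z := z) (by rw [hre]; exact hx0) (by rw [hre]; exact hxpi)
    (by rw [him]; exact hy0) hslt
  have h2 : ‖(Complex.sin z)‖ ^ 2 < (‖z‖ * ‖(Complex.cos z)‖) ^ 2 :=
    pow_lt_pow_left₀ hfinal (norm_nonneg _) (by norm_num)
  rw [habs_sin, mul_pow, habs_z, habs_cos] at h2
  exact h2

-- claim A' in real coordinates
lemma realKey {x y : ℝ} (hx0 : 0 ≤ x) (hy0 : 0 ≤ y)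
    (h2 : 4 * (x ^ 2 + y ^ 2) < Real.sin (2 * x) ^ 2 + Real.sinh (2 * y) ^ 2) :
    Real.sin x ^ 2 + Real.sinh y ^ 2 < (x ^ 2 + y ^ 2) * (Real.cos x ^ 2 + Real.sinh y ^ 2) := by
  set u := Real.sin x ^ 2 + Real.sinh y ^ 2 with hu
  set v := Real.cos x ^ 2 + Real.sinh y ^ 2 with hv
  set r2 := x ^ 2 + y ^ 2 with hr2
  -- hypothesis is r2 < u * v
  have hid : Real.sin (2 * x) ^ 2 + Real.sinh (2 * y) ^ 2 = 4 * (u * v) := by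
    rw [Real.sin_two_mul, Real.sinh_two_mul, hu, hv]
    have hp := Real.sin_sq_add_cos_sq x
    have hc := Real.cosh_sq y
    nlinarith [hp, hc]
  rw [hid] at h2
  have huv : r2 < u * v := by linarith
  have hu0 : 0 ≤ u := by positivity
  have hv0 : 0 ≤ v := by positivity
  have hr20 : 0 < r2 := by
    rcases eq_or_lt_of_le (by positivity : (0:ℝ) ≤ r2) with h' | h'
    · exfalso
      have hx' : x = 0 := by nlinarith [sq_nonneg x, sq_nonneg y]
      have hy' : y = 0 := by nlinarith [sq_nonneg x, sq_nonneg y]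
      have hu' : u = 0 := by simp [hu, hx', hy']
      rw [hu'] at huv
      rw [zero_mul] at huv
      rw [← h'] at huv
      exact absurd huv (lt_irrefl 0)
    · exact h'
  have hupos : 0 < u := by
    rcases eq_or_lt_of_le hu0 with h' | h'
    · exfalso; rw [← h'] at huv; simp at huv; linarith
    · exact h'
  have hvpos : 0 < v := by
    rcases eq_or_lt_of_le hv0 with h' | h'
    · exfalso; rw [← h'] at huv; simp at huv; linarith
    · exact h'
  rcases le_or_gt u r2 with hcase | hcase
  · -- u ≤ r2 : easy
    nlinarith [mul_pos hupos hvpos, mul_lt_mul_of_pos_left huv hupos]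
  · rcases le_or_gt 2 r2 with hbig | hsmall
    · -- r2 ≥ 2 : direct
      have hsin1 : Real.sin x ^ 2 ≤ 1 := Real.sin_sq_le_one x
      have hsinh : r2 - 1 < Real.sinh y ^ 2 := by
        simp only [hu] at hcase
        nlinarith
      have hcos0 : 0 ≤ Real.cos x ^ 2 := sq_nonneg _
      simp only [hu, hv]
      nlinarith [hsinh, hsin1, hcos0, hbig]
    · -- r2 < 2 : claim D
      have hx2 : x ^ 2 < 2 := by nlinarith [sq_nonneg y]
      have := claimD hx0 hy0 hx2 (by simp only [hu] at hcase; linarith)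
      simp only [hu, hv, hr2]
      exact this

-- the key complex inequality (claim A')
lemma keyComplex {z : ℂ} (h2 : ‖(2 * z)‖ < ‖(Complex.sin (2 * z))‖) :
    ‖(Complex.sin z)‖ < ‖z‖ * ‖(Complex.cos z)‖ := by
  -- reduce to |x|, |y|
  set x := |z.re| with hx
  set y := |z.im| with hy
  have hsin2 : Real.sin (2 * z.re) ^ 2 = Real.sin (2 * x) ^ 2 := by
    rcases abs_cases z.re with ⟨h', _⟩ | ⟨h', _⟩ <;> rw [hx, h']
    rw [mul_neg, Real.sin_neg]; ring
  have hsinh2 : Real.sinh (2 * z.im) ^ 2 = Real.sinh (2 * y) ^ 2 := by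
    rcases abs_cases z.im with ⟨h', _⟩ | ⟨h', _⟩ <;> rw [hy, h']
    rw [mul_neg, Real.sinh_neg]; ring
  have hsin1 : Real.sin z.re ^ 2 = Real.sin x ^ 2 := by
    rcases abs_cases z.re with ⟨h', _⟩ | ⟨h', _⟩ <;> rw [hx, h']
    rw [Real.sin_neg]; ring
  have hcos1 : Real.cos z.re ^ 2 = Real.cos x ^ 2 := by
    rcases abs_cases z.re with ⟨h', _⟩ | ⟨h', _⟩ <;> rw [hx, h']
    rw [Real.cos_neg]
  have hsinh1 : Real.sinh z.im ^ 2 = Real.sinh y ^ 2 := by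
    rcases abs_cases z.im with ⟨h', _⟩ | ⟨h', _⟩ <;> rw [hy, h']
    rw [Real.sinh_neg]; ring
  have h2sq : ‖(2 * z)‖ ^ 2 < ‖(Complex.sin (2 * z))‖ ^ 2 := by
    nlinarith [norm_nonneg (2 * z), norm_nonneg (Complex.sin (2 * z))]
  rw [abs_z_sq, abs_sin_sq] at h2sq
  have hre2 : (2 * z).re = 2 * z.re := by simp
  have him2 : (2 * z).im = 2 * z.im := by simp
  rw [hre2, him2] at h2sq
  have hreal : 4 * (x ^ 2 + y ^ 2) < Real.sin (2 * x) ^ 2 + Real.sinh (2 * y) ^ 2 := by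
    rw [← hsin2, ← hsinh2]
    have : x ^ 2 = z.re ^ 2 := by rw [hx, _root_.sq_abs]
    have h'' : y ^ 2 = z.im ^ 2 := by rw [hy, _root_.sq_abs]
    rw [this, h'']
    nlinarith [h2sq]
  have hmain := realKey (abs_nonneg z.re) (abs_nonneg z.im) hreal
  have goal_sq : ‖(Complex.sin z)‖ ^ 2 < (‖z‖ * ‖(Complex.cos z)‖) ^ 2 := by
    rw [abs_sin_sq, mul_pow, abs_z_sq, abs_cos_sq, hsin1, hsinh1, hcos1]
    have hx2 : z.re ^ 2 = x ^ 2 := by rw [hx, _root_.sq_abs]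
    have hy2 : z.im ^ 2 = y ^ 2 := by rw [hy, _root_.sq_abs]
    rw [hx2, hy2]
    exact hmain
  have habs0 : 0 ≤ ‖z‖ * ‖(Complex.cos z)‖ := by positivity
  nlinarith [norm_nonneg (Complex.sin z), goal_sq, habs0]

/-! ### The set `U` and the map `Λ` -/

noncomputable def LamMap (z : ℂ) : ℂ := z * Complex.cos z / Complex.sin z

def USet : Set ℂ := {z : ℂ | 0 < z.im ∧ ‖(2 * z)‖ < ‖(Complex.sin (2 * z))‖}

lemma mem_USet_iff {z : ℂ} : z ∈ USet ↔ 0 < z.im ∧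
    4 * (z.re ^ 2 + z.im ^ 2) < Real.sin (2 * z.re) ^ 2 + Real.sinh (2 * z.im) ^ 2 := by
  constructor
  · rintro ⟨h1, h2⟩
    refine ⟨h1, ?_⟩
    have h2sq : ‖(2 * z)‖ ^ 2 < ‖(Complex.sin (2 * z))‖ ^ 2 := by
      nlinarith [norm_nonneg (2 * z), norm_nonneg (Complex.sin (2 * z))]
    rw [abs_z_sq, abs_sin_sq] at h2sq
    have hre2 : (2 * z).re = 2 * z.re := by simp
    have him2 : (2 * z).im = 2 * z.im := by simp
    rw [hre2, him2] at h2sq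
    nlinarith [h2sq]
  · rintro ⟨h1, h2⟩
    refine ⟨h1, ?_⟩
    have h2sq : ‖(2 * z)‖ ^ 2 < ‖(Complex.sin (2 * z))‖ ^ 2 := by
      rw [abs_z_sq, abs_sin_sq]
      have hre2 : (2 * z).re = 2 * z.re := by simp
      have him2 : (2 * z).im = 2 * z.im := by simp
      rw [hre2, him2]
      nlinarith [h2]
    nlinarith [norm_nonneg (2 * z), norm_nonneg (Complex.sin (2 * z)), h2sq]

lemma USet_basic {z : ℂ} (hz : z ∈ USet) :
    Complex.sin z ≠ 0 ∧ Complex.cos z ≠ 0 ∧ z ≠ 0 := by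
  obtain ⟨h1, h2⟩ := hz
  have hz0 : z ≠ 0 := by
    intro h'
    rw [h'] at h1
    simp at h1
  have h2z : (2 : ℂ) * z ≠ 0 := by
    simp [hz0]
  have habs : 0 < ‖(2 * z)‖ := (norm_pos_iff.2 h2z)
  have hsin2 : Complex.sin (2 * z) ≠ 0 := by
    intro h'
    rw [h'] at h2
    simp at h2
    nlinarith [norm_nonneg z, h2]
  rw [Complex.sin_two_mul] at hsin2
  refine ⟨?_, ?_, hz0⟩
  · intro h'; apply hsin2; rw [h']; ring
  · intro h'; apply hsin2; rw [h']; ring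

lemma iaxis_mem {t : ℝ} (ht : 0 < t) : (⟨0, t⟩ : ℂ) ∈ USet := by
  rw [mem_USet_iff]
  refine ⟨ht, ?_⟩
  have h1 : 2 * t < Real.sinh (2 * t) := Real.self_lt_sinh_iff.2 (by linarith)
  have : (0:ℂ).re = 0 := rfl
  show 4 * ((0:ℝ) ^ 2 + t ^ 2) < Real.sin (2 * 0) ^ 2 + Real.sinh (2 * t) ^ 2
  simp only [mul_zero, Real.sin_zero]
  nlinarith [h1]

lemma USet_up {x y y' : ℝ} (hy : 0 < y) (hyy : y ≤ y') (h : (⟨x, y⟩ : ℂ) ∈ USet) :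
    (⟨x, y'⟩ : ℂ) ∈ USet := by
  rw [mem_USet_iff] at h ⊢
  obtain ⟨h1, h2⟩ := h
  refine ⟨by linarith [hyy, hy], ?_⟩
  have hmono := sinh_sq_sub_sq_mono (Set.mem_Ici.2 (by linarith : (0:ℝ) ≤ 2 * y))
    (Set.mem_Ici.2 (by linarith : (0:ℝ) ≤ 2 * y')) (by linarith)
  simp only at hmono h2 ⊢
  nlinarith [hmono, h2]

lemma Ygrow (x Y : ℝ) (hY1 : 1 ≤ Y) (hYx : |x| + 1 ≤ Y) :
    4 * (x ^ 2 + Y ^ 2) < Real.sinh (2 * Y) ^ 2 := by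
  have h1 : 2 * Y + (2 * Y) ^ 3 / 6 ≤ Real.sinh (2 * Y) := sinh_cubic (by linarith)
  have hx : x ^ 2 = |x| ^ 2 := (_root_.sq_abs x).symm
  have h2 : x ^ 2 < Y ^ 2 := by
    rw [hx]
    nlinarith [abs_nonneg x]
  have hY2 : 1 ≤ Y ^ 2 := by nlinarith
  have h3 : Y ^ 2 ≤ Y ^ 4 := by nlinarith [hY2, sq_nonneg Y]
  have h4 : 0 ≤ 2 * Y + (2 * Y) ^ 3 / 6 := by nlinarith
  have h5 : (2 * Y + (2 * Y) ^ 3 / 6) ^ 2 ≤ Real.sinh (2 * Y) ^ 2 := by nlinarith [h1, h4]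
  nlinarith [h5, h2, h3, sq_nonneg Y, sq_nonneg (Y ^ 2), sq_nonneg (Y ^ 3)]

lemma joinedIn_of_segment {s : Set ℂ} {a b : ℂ} (h : segment ℝ a b ⊆ s) : JoinedIn s a b :=
  (((convex_segment a b).isPathConnected ⟨a, left_mem_segment ℝ a b⟩).joinedIn a
    (left_mem_segment ℝ a b) b (right_mem_segment ℝ a b)).mono h

lemma seg_coords {a b w : ℂ} (hw : w ∈ segment ℝ a b) :
    ∃ t ∈ Set.Icc (0:ℝ) 1, w.re = (1 - t) * a.re + t * b.re ∧ w.im = (1 - t) * a.im + t * b.im := by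
  rw [segment_eq_image] at hw
  obtain ⟨t, ht, hw⟩ := hw
  refine ⟨t, ht, ?_, ?_⟩ <;> rw [← hw] <;> simp [Complex.add_re, Complex.add_im,
    Complex.smul_re, Complex.smul_im, smul_eq_mul]

lemma USet_pathConnected : IsPathConnected USet := by
  have hI : Complex.I ∈ USet := by
    have : Complex.I = (⟨0, 1⟩ : ℂ) := Complex.ext rfl rfl
    rw [this]
    exact iaxis_mem one_pos
  refine ⟨Complex.I, hI, ?_⟩
  intro z hz
  have hzim : 0 < z.im := hz.1
  set x := z.re with hx
  set y := z.im with hy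
  set Y := y + |x| + 1 with hY
  have hY1 : 1 ≤ Y := by
    have := abs_nonneg x
    rw [hY]; linarith
  have hYx : |x| + 1 ≤ Y := by rw [hY]; linarith
  have hYy : y ≤ Y := by
    have := abs_nonneg x
    rw [hY]; linarith
  have hzeq : z = (⟨x, y⟩ : ℂ) := Complex.ext rfl rfl
  -- three segments
  have j1 : JoinedIn USet (⟨x, y⟩ : ℂ) (⟨x, Y⟩ : ℂ) := by
    apply joinedIn_of_segment
    intro w hw
    obtain ⟨t, ht, hwre, hwim⟩ := seg_coords hw
    have hwre' : w.re = x := by rw [hwre]; simp; ring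
    have hwim' : w.im = (1 - t) * y + t * Y := by rw [hwim]
    have hge : y ≤ w.im := by rw [hwim']; nlinarith [ht.1, ht.2, hYy]
    have hweq : w = (⟨x, w.im⟩ : ℂ) := Complex.ext hwre' rfl
    rw [hweq]
    exact USet_up hzim hge (by rw [← hzeq]; exact hz)
  have j2 : JoinedIn USet (⟨x, Y⟩ : ℂ) (⟨0, Y⟩ : ℂ) := by
    apply joinedIn_of_segment
    intro w hw
    obtain ⟨t, ht, hwre, hwim⟩ := seg_coords hw
    have hwim' : w.im = Y := by rw [hwim]; simp; ring
    have hwre' : w.re = (1 - t) * x := by rw [hwre]; simp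
    have hweq : w = (⟨w.re, Y⟩ : ℂ) := Complex.ext rfl hwim'
    rw [hweq, mem_USet_iff]
    refine ⟨by simp; linarith [hY1], ?_⟩
    have hgrow := Ygrow x Y hY1 hYx
    have hre2 : w.re ^ 2 ≤ x ^ 2 := by
      rw [hwre']
      nlinarith [mul_nonneg (mul_nonneg ht.1 (by linarith [ht.2] : (0:ℝ) ≤ 2 - t)) (sq_nonneg x)]
    simp only
    nlinarith [sq_nonneg (Real.sin (2 * w.re)), hgrow, hre2]
  have j3 : JoinedIn USet (⟨0, Y⟩ : ℂ) Complex.I := by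
    apply joinedIn_of_segment
    intro w hw
    obtain ⟨t, ht, hwre, hwim⟩ := seg_coords hw
    have hIre : Complex.I.re = 0 := Complex.I_re
    have hIim : Complex.I.im = 1 := Complex.I_im
    have hwre' : w.re = 0 := by rw [hwre]; simp [hIre]
    have hwim' : w.im = (1 - t) * Y + t := by rw [hwim]; simp [hIim]
    have him1 : 0 < w.im := by rw [hwim']; nlinarith [ht.1, ht.2, hY1]
    have hweq : w = (⟨0, w.im⟩ : ℂ) := Complex.ext hwre' rfl
    rw [hweq]
    exact iaxis_mem him1
  rw [hzeq]
  exact ((j1.trans j2).trans j3).symm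

def OmegaS : Set ℂ := {lam : ℂ | 1 < ‖lam‖ ∧
  ∃ z : ℂ, Complex.cos z ≠ 0 ∧ lam * Complex.tan z = z ∧
    ‖(deriv (ftan lam) z)‖ < 1}

lemma deriv_ftan (lam : ℂ) {z : ℂ} (hc : Complex.cos z ≠ 0) :
    deriv (ftan lam) z = lam * (1 / Complex.cos z ^ 2) :=
  (((Complex.hasDerivAt_tan hc).const_mul lam) : HasDerivAt (ftan lam) _ z).deriv

lemma OmegaS_eq : OmegaS = LamMap '' USet := by
  ext lam
  constructor
  · rintro ⟨hlam, z, hc, hfix, hder⟩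
    rw [deriv_ftan lam hc] at hder
    have hz0 : z ≠ 0 := by
      intro h'
      rw [h'] at hder
      simp at hder
      linarith
    have hsin : Complex.sin z ≠ 0 := by
      intro h'
      apply hz0
      rw [← hfix, Complex.tan_eq_sin_div_cos, h']
      simp
    have hfix' : lam * Complex.sin z = z * Complex.cos z := by
      rw [Complex.tan_eq_sin_div_cos] at hfix
      field_simp at hfix
      linear_combination hfix
    have lam_eq : lam = z * Complex.cos z / Complex.sin z := by
      rw [eq_div_iff hsin]
      exact hfix'
    have hmult : lam * (1 / Complex.cos z ^ 2) = 2 * z / Complex.sin (2 * z) := by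
      rw [Complex.sin_two_mul, lam_eq]
      field_simp
    rw [hmult] at hder
    have hsin2 : Complex.sin (2 * z) ≠ 0 := by
      rw [Complex.sin_two_mul]
      simp [hsin, hc]
    have habs2 : 0 < ‖(Complex.sin (2 * z))‖ := (norm_pos_iff.2 hsin2)
    have h2 : ‖(2 * z)‖ < ‖(Complex.sin (2 * z))‖ := by
      rw [norm_div] at hder
      exact (div_lt_one habs2).1 hder
    have him : z.im ≠ 0 := by
      intro h'
      have hz : z = ((z.re : ℝ) : ℂ) := by
        apply Complex.ext
        · simp
        · simp [h']
      have h2z : (2 * z) = ((2 * z.re : ℝ) : ℂ) := by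
        apply Complex.ext <;> simp [h']
      rw [h2z, ← Complex.ofReal_sin, Complex.norm_real, Complex.norm_real, Real.norm_eq_abs, Real.norm_eq_abs] at h2
      exact absurd h2 (not_lt.2 (Real.abs_sin_le_abs.trans (le_of_eq rfl)))
    rcases lt_or_gt_of_ne him with hneg | hpos
    · -- use -z
      refine ⟨-z, ⟨by simp; linarith, ?_⟩, ?_⟩
      · have e1 : (2 : ℂ) * -z = -(2 * z) := by ring
        rw [e1, Complex.sin_neg]
        simpa using h2
      · show LamMap (-z) = lam
        rw [LamMap, Complex.sin_neg, Complex.cos_neg, lam_eq]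
        rw [neg_mul, neg_div_neg_eq]
    · refine ⟨z, ⟨hpos, h2⟩, ?_⟩
      show LamMap z = lam
      rw [LamMap, lam_eq]
  · rintro ⟨z, hzU, rfl⟩
    obtain ⟨hsin, hc, hz0⟩ := USet_basic hzU
    obtain ⟨him, h2⟩ := hzU
    have habs_sin : 0 < ‖(Complex.sin z)‖ := (norm_pos_iff.2 hsin)
    constructor
    · -- 1 < abs (LamMap z)
      have hkey := keyComplex h2
      rw [LamMap, norm_div, norm_mul]
      rw [lt_div_iff₀ habs_sin, one_mul]
      exact hkey
    · refine ⟨z, hc, ?_, ?_⟩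
      · rw [LamMap, Complex.tan_eq_sin_div_cos]
        field_simp
      · rw [deriv_ftan _ hc]
        have hmult : LamMap z * (1 / Complex.cos z ^ 2) = 2 * z / Complex.sin (2 * z) := by
          rw [Complex.sin_two_mul, LamMap]
          field_simp
        rw [hmult, norm_div]
        have hsin2 : Complex.sin (2 * z) ≠ 0 := by
          rw [Complex.sin_two_mul]
          simp [hsin, hc]
        rw [div_lt_one ((norm_pos_iff.2 hsin2))]
        exact h2

lemma OmegaS_isConnected : IsConnected OmegaS := by
  rw [OmegaS_eq]
  apply IsConnected.image (USet_pathConnected.isConnected)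
  apply ContinuousOn.div
  · fun_prop
  · fun_prop
  · intro z hz
    exact (USet_basic hz).1

lemma OmegaS_real {x : ℝ} (hx : 1 < x) : (x : ℂ) ∈ OmegaS := by
  -- find y > 0 with x * sinh y = y * cosh y
  obtain ⟨a, ha0, hacosh⟩ : ∃ a : ℝ, 0 < a ∧ Real.cosh a < x := by
    have hcont : Filter.Tendsto Real.cosh (nhds 0) (nhds 1) := by
      have := Real.continuous_cosh.tendsto 0
      simpa [Real.cosh_zero] using this
    have hev : ∀ᶠ a in nhds 0, Real.cosh a < x :=
      hcont.eventually (Filter.tendsto_id.eventually_lt_const hx)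
    have hev2 : ∀ᶠ a in nhdsWithin 0 (Set.Ioi 0), Real.cosh a < x :=
      hev.filter_mono nhdsWithin_le_nhds
    obtain ⟨a, ha⟩ := (hev2.and (eventually_mem_nhdsWithin)).exists
    exact ⟨a, ha.2, ha.1⟩
  set f : ℝ → ℝ := fun y => x * Real.sinh y - y * Real.cosh y with hf
  have hfa : 0 < f a := by
    have h1 : a ≤ Real.sinh a := self_le_sinh' ha0.le
    have h2 : 0 < Real.sinh a := Real.sinh_pos_iff.2 ha0
    have := Real.cosh_pos a
    simp only [hf]
    nlinarith
  set b : ℝ := a + x + 1 with hb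
  have hab : a < b := by rw [hb]; linarith
  have hfb : f b < 0 := by
    have h1 : Real.sinh b < Real.cosh b := Real.sinh_lt_cosh b
    have h2 : 0 < Real.cosh b := Real.cosh_pos b
    have h3 : x < b := by rw [hb]; linarith
    have h4 : 0 < Real.sinh b := Real.sinh_pos_iff.2 (by linarith)
    simp only [hf]
    nlinarith
  have hcontf : ContinuousOn f (Set.Icc a b) := by fun_prop
  obtain ⟨y, hy, hfy⟩ : ∃ y ∈ Set.Icc a b, f y = 0 := by
    have := intermediate_value_Icc' hab.le hcontf
    have h0mem : (0:ℝ) ∈ Set.Icc (f b) (f a) := ⟨hfb.le, hfa.le⟩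
    obtain ⟨y, hy, hfy⟩ := this h0mem
    exact ⟨y, hy, hfy⟩
  have hy0 : 0 < y := lt_of_lt_of_le ha0 hy.1
  have hbal : x * Real.sinh y = y * Real.cosh y := by
    have : x * Real.sinh y - y * Real.cosh y = 0 := hfy
    linarith
  have hcoshy : (0:ℝ) < Real.cosh y := Real.cosh_pos y
  have hsinhy : (0:ℝ) < Real.sinh y := Real.sinh_pos_iff.2 hy0
  refine ⟨?_, ?_⟩
  · show 1 < ‖(x : ℂ)‖
    rw [Complex.norm_real, Real.norm_eq_abs]
    rw [abs_of_pos (by linarith : (0:ℝ) < x)]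
    exact hx
  · refine ⟨(y : ℂ) * Complex.I, ?_, ?_, ?_⟩
    · rw [Complex.cos_mul_I, ← Complex.ofReal_cosh]
      simp only [ne_eq, Complex.ofReal_eq_zero]
      linarith
    · have h1 : Complex.tan ((y : ℂ) * Complex.I) = ((Real.sinh y / Real.cosh y : ℝ) : ℂ) * Complex.I := by
        rw [Complex.tan_eq_sin_div_cos, Complex.sin_mul_I, Complex.cos_mul_I,
          ← Complex.ofReal_sinh, ← Complex.ofReal_cosh]
        push_cast
        ring
      rw [h1]
      rw [show ((x : ℂ) * ((((Real.sinh y / Real.cosh y : ℝ)) : ℂ) * Complex.I))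
          = (((x * (Real.sinh y / Real.cosh y) : ℝ)) : ℂ) * Complex.I by push_cast; ring]
      have hval : x * (Real.sinh y / Real.cosh y) = y := by
        field_simp
        linarith [hbal]
      rw [hval]
    · have hc : Complex.cos ((y : ℂ) * Complex.I) ≠ 0 := by
        rw [Complex.cos_mul_I, ← Complex.ofReal_cosh]
        simp only [ne_eq, Complex.ofReal_eq_zero]
        linarith
      rw [deriv_ftan _ hc]
      rw [Complex.cos_mul_I, ← Complex.ofReal_cosh]
      have : (x : ℂ) * (1 / ((Real.cosh y : ℝ) : ℂ) ^ 2) = (((x / Real.cosh y ^ 2 : ℝ)) : ℂ) := by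
        push_cast
        field_simp
      rw [this, Complex.norm_real, Real.norm_eq_abs]
      rw [abs_of_pos (by positivity)]
      rw [div_lt_one (by positivity)]
      -- x = y cosh y / sinh y ; need x < cosh y ^ 2 i.e. y cosh y < sinh y cosh y ^2
      have hxval : x = y * Real.cosh y / Real.sinh y := by
        rw [eq_div_iff hsinhy.ne']
        linarith [hbal]
      rw [hxval, div_lt_iff₀ hsinhy]
      have h1 : y < Real.sinh y := Real.self_lt_sinh_iff.2 hy0
      have h2 : 1 ≤ Real.cosh y := Real.one_le_cosh y
      nlinarith [mul_lt_mul_of_pos_right h1 hcoshy, mul_pos hsinhy hcoshy,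
        mul_le_mul_of_nonneg_left h2 (mul_pos hsinhy hcoshy).le]

/-- The set of parameters `λ` of modulus greater than one for which `f_λ` has an
attracting fixed point is connected and contains every real `λ > 1` (it is the
hyperbolic component `Ω₁`). -/
theorem Omega_one_connected :
    IsConnected {lam : ℂ | 1 < ‖lam‖ ∧
      ∃ z : ℂ, Complex.cos z ≠ 0 ∧ lam * Complex.tan z = z ∧
        ‖deriv (ftan lam) z‖ < 1} ∧
    ∀ x : ℝ, 1 < x → (x : ℂ) ∈ {lam : ℂ | 1 < ‖lam‖ ∧
      ∃ z : ℂ, Complex.cos z ≠ 0 ∧ lam * Complex.tan z = z ∧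
        ‖deriv (ftan lam) z‖ < 1} := by
  exact ⟨OmegaS_isConnected, fun x hx => OmegaS_real hx⟩
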